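/- If there exist (i) a resolvable decomposition of the complete u-partite graph with parts of size g into parallel classes of K_4's (a 4-RGDD of type g^u, having t = g(u-1)/3 parallel classes), (ii) decompositions of 2K_4 into 3 parallel classes of 4-cycles and into 4 parallel classes of 3-stars, and (iii) a decomposition of 2K_g into r_2 parallel classes of 4-cycles and s_2 parallel classes of 3-stars, then for every choice of nonnegative integers partitioning the t classes, there is a decomposition of 2K_{gu} into r_2 + 3x parallel classes of 4-cycles and s_2 + 4(t-x) parallel classes of 3-stars, for each x with 0 ≤ x ≤ t. -/

import Mathlib

open Finset

/-- A block on four (named) vertices, used both for 4-cycles and 3-stars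
(for a 3-star, `a` is the center). -/
structure Blk (V : Type) where
  a : V
  b : V
  c : V
  d : V

variable {V : Type} [DecidableEq V] [Fintype V]

/-- The vertex set of a block. -/
def Blk.verts (B : Blk V) : Finset V := {B.a, B.b, B.c, B.d}

/-- The edge multiset of the 4-cycle (a,b,c,d). -/
def Blk.cycEdges (B : Blk V) : Multiset (Sym2 V) :=
  {s(B.a, B.b), s(B.b, B.c), s(B.c, B.d), s(B.d, B.a)}

/-- The edge multiset of the 3-star with center `a` and leaves `b,c,d`. -/
def Blk.stEdges (B : Blk V) : Multiset (Sym2 V) :=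
  {s(B.a, B.b), s(B.a, B.c), s(B.a, B.d)}

/-- A parallel class: blocks have 4 distinct vertices each, and every vertex
of `V` lies in exactly one block of the class. -/
def IsParallel (L : List (Blk V)) : Prop :=
  (∀ B ∈ L, B.verts.card = 4) ∧
  ∀ v : V, L.countP (fun B => decide (v ∈ B.verts)) = 1

/-- All edges of a class of 4-cycles. -/
def classCyc (L : List (Blk V)) : Multiset (Sym2 V) := (L.map Blk.cycEdges).sum

/-- All edges of a class of 3-stars. -/
def classSt (L : List (Blk V)) : Multiset (Sym2 V) := (L.map Blk.stEdges).sum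

/-- The edge multiset of the complete multigraph `2K_v`: every unordered pair of
distinct vertices with multiplicity 2. -/
def doubleK (v : ℕ) : Multiset (Sym2 (Fin v)) :=
  2 • ((univ : Finset (Sym2 (Fin v))).filter (fun e => ¬ e.IsDiag)).val

/-- A `(C₄, K_{1,3})`-URD`(v,2;r,s)`: a partition of the edge multiset of `2K_v`
into `r` parallel classes of 4-cycles and `s` parallel classes of 3-stars. -/
def URD (v r s : ℕ) : Prop :=
  ∃ Cs Ss : List (List (Blk (Fin v))),
    Cs.length = r ∧ Ss.length = s ∧
    (∀ L ∈ Cs, IsParallel L) ∧ (∀ L ∈ Ss, IsParallel L) ∧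
    (Cs.map classCyc).sum + (Ss.map classSt).sum = doubleK v

/-- The six edges of a complete graph `K_4` on the four vertices of a block. -/
def Blk.k4Edges (B : Blk V) : Multiset (Sym2 V) :=
  {s(B.a, B.b), s(B.a, B.c), s(B.a, B.d), s(B.b, B.c), s(B.b, B.d), s(B.c, B.d)}

/-- The edge multiset of the complete multipartite graph with `u` parts of
size `g` (multiplicity 1). -/
def mpEdges (u g : ℕ) : Multiset (Sym2 (Fin u × Fin g)) :=
  ((univ : Finset (Sym2 (Fin u × Fin g))).filter
      (fun e => ¬ (e.map Prod.fst).IsDiag)).val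

/-- A resolvable 4-GDD of type `g^u` with `t` parallel classes of `K_4`'s. -/
def IsRGDD (u g t : ℕ) : Prop :=
  ∃ Cs : List (List (Blk (Fin u × Fin g))),
    Cs.length = t ∧ (∀ L ∈ Cs, IsParallel L) ∧
    (Cs.map (fun L => (L.map Blk.k4Edges).sum)).sum = mpEdges u g

set_option linter.unusedSectionVars false

variable {W : Type} [DecidableEq W] [Fintype W]

def mapBlk (f : W → V) (B : Blk W) : Blk V := ⟨f B.a, f B.b, f B.c, f B.d⟩

lemma verts_mapBlk (f : W → V) (B : Blk W) : (mapBlk f B).verts = B.verts.image f := by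
  simp [mapBlk, Blk.verts, Finset.image_insert]

lemma cycEdges_mapBlk (f : W → V) (B : Blk W) :
    (mapBlk f B).cycEdges = B.cycEdges.map (Sym2.map f) := by
  simp [mapBlk, Blk.cycEdges]

lemma stEdges_mapBlk (f : W → V) (B : Blk W) :
    (mapBlk f B).stEdges = B.stEdges.map (Sym2.map f) := by
  simp [mapBlk, Blk.stEdges]

lemma sum_map_map {α : Type} (l : List α) (f : α → Multiset (Sym2 W)) (σ : Sym2 W → Sym2 V) :
    (l.map (fun x => (f x).map σ)).sum = ((l.map f).sum).map σ := by
  induction l with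
  | nil => simp
  | cons a l ih => simp [ih]

lemma classCyc_map (f : W → V) (L : List (Blk W)) :
    classCyc (L.map (mapBlk f)) = (classCyc L).map (Sym2.map f) := by
  unfold classCyc
  rw [List.map_map, ← sum_map_map]
  exact congrArg List.sum (List.map_congr_left (fun B _ => cycEdges_mapBlk f B))

lemma classSt_map (f : W → V) (L : List (Blk W)) :
    classSt (L.map (mapBlk f)) = (classSt L).map (Sym2.map f) := by
  unfold classSt
  rw [List.map_map, ← sum_map_map]
  exact congrArg List.sum (List.map_congr_left (fun B _ => stEdges_mapBlk f B))

lemma classCyc_append (L M : List (Blk V)) : classCyc (L ++ M) = classCyc L + classCyc M := by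
  simp [classCyc]

lemma classCyc_flatMap {α : Type} (l : List α) (f : α → List (Blk V)) :
    classCyc (l.flatMap f) = (l.map (fun a => classCyc (f a))).sum := by
  induction l with
  | nil => rfl
  | cons a l ih => simp [List.flatMap_cons, classCyc_append, ih]

lemma classSt_append (L M : List (Blk V)) : classSt (L ++ M) = classSt L + classSt M := by
  simp [classSt]

lemma classSt_flatMap {α : Type} (l : List α) (f : α → List (Blk V)) :
    classSt (l.flatMap f) = (l.map (fun a => classSt (f a))).sum := by
  induction l with
  | nil => rfl
  | cons a l ih => simp [List.flatMap_cons, classSt_append, ih]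

def Covers (L : List (Blk V)) (S : Finset V) : Prop :=
  (∀ B ∈ L, B.verts.card = 4) ∧
  ∀ v : V, L.countP (fun B => decide (v ∈ B.verts)) = if v ∈ S then 1 else 0

lemma isParallel_of_covers_univ {L : List (Blk V)} (h : Covers L Finset.univ) :
    IsParallel L := ⟨h.1, fun v => by simpa using h.2 v⟩

lemma countP_eq_sum_ite {α : Type} (L : List α) (p : α → Bool) :
    L.countP p = (L.map (fun a => if p a then 1 else 0)).sum := by
  induction L with
  | nil => rfl
  | cons a L ih => by_cases h : p a <;> simp [List.countP_cons, h, ih, Nat.add_comm]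

lemma covers_flatMap {ι : Type} (J : List ι) (F : ι → List (Blk V)) (S : ι → Finset V)
    (h : ∀ j ∈ J, Covers (F j) (S j)) (T : Finset V)
    (hcount : ∀ v : V, J.countP (fun j => decide (v ∈ S j)) = if v ∈ T then 1 else 0) :
    Covers (J.flatMap F) T := by
  constructor
  · intro B hB
    obtain ⟨j, hj, hBj⟩ := List.mem_flatMap.mp hB
    exact (h j hj).1 B hBj
  · intro v
    rw [List.countP_flatMap, ← hcount v, countP_eq_sum_ite]
    refine congrArg List.sum (List.map_congr_left fun j hj => ?_)
    have := (h j hj).2 v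
    by_cases hv : v ∈ S j <;> simp_all

lemma covers_map_of_injective (f : W → V) (hf : Function.Injective f)
    (M : List (Blk W)) (hM : IsParallel M) :
    Covers (M.map (mapBlk f)) (Finset.univ.image f) := by
  constructor
  · intro B hB
    obtain ⟨K, hK, rfl⟩ := List.mem_map.mp hB
    rw [verts_mapBlk, Finset.card_image_of_injective _ hf]
    exact hM.1 K hK
  · intro v
    rw [List.countP_map]
    by_cases hv : v ∈ Finset.univ.image f
    · obtain ⟨w, -, rfl⟩ := Finset.mem_image.mp hv
      rw [if_pos hv]
      rw [← hM.2 w]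
      refine List.countP_congr fun K _ => ?_
      simp [Function.comp, verts_mapBlk, hf.eq_iff]
    · rw [if_neg hv]
      rw [List.countP_eq_zero]
      intro K _
      simp only [Function.comp, verts_mapBlk, decide_eq_true_eq, Finset.mem_image]
      rintro ⟨w, -, rfl⟩
      exact hv (Finset.mem_image.mpr ⟨w, Finset.mem_univ w, rfl⟩)

def phi (B : Blk V) : Fin 4 → V := ![B.a, B.b, B.c, B.d]

lemma image_phi (B : Blk V) : Finset.univ.image (phi B) = B.verts := by
  have h : (Finset.univ : Finset (Fin 4)) = {0, 1, 2, 3} := by decide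
  rw [h]
  simp [phi, Blk.verts, Finset.image_insert]

lemma phi_injective (B : Blk V) (hB : B.verts.card = 4) : Function.Injective (phi B) := by
  have h1 : (Finset.univ.image (phi B)).card = (Finset.univ : Finset (Fin 4)).card := by
    rw [image_phi, hB]; simp
  have h2 := Finset.injOn_of_card_image_eq h1
  rw [Finset.coe_univ] at h2
  exact fun a b hab => h2 (Set.mem_univ a) (Set.mem_univ b) hab

lemma doubleK_four :
    doubleK 4 = 2 • ({s(0,1), s(0,2), s(0,3), s(1,2), s(1,3), s(2,3)} : Multiset (Sym2 (Fin 4))) := by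
  rw [doubleK]
  congr 1

lemma map_doubleK_four (B : Blk V) :
    (doubleK 4).map (Sym2.map (phi B)) = 2 • B.k4Edges := by
  rw [doubleK_four, Multiset.map_nsmul]
  congr 1

lemma count_filter_univ {α : Type} [DecidableEq α] [Fintype α] (p : α → Prop) [DecidablePred p]
    (z : α) : ((Finset.univ.filter p).val).count z = if p z then 1 else 0 := by
  rw [Finset.filter_val, Multiset.count_filter]
  by_cases h : p z
  · rw [if_pos h, if_pos h]
    exact Multiset.count_eq_one_of_mem Finset.univ.nodup (Finset.mem_val.mpr (Finset.mem_univ z))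
  · simp [h]

lemma count_list_sum {α β : Type} [DecidableEq β] (l : List α) (f : α → Multiset β) (z : β) :
    ((l.map f).sum).count z = (l.map (fun a => (f a).count z)).sum := by
  induction l with
  | nil => simp
  | cons x l ih => simp [ih]

lemma count_map_group {u g : ℕ} (m : Multiset (Sym2 (Fin g))) (i i₁ i₂ : Fin u) (a b : Fin g) :
    ((m.map (Sym2.map (Prod.mk i))).count s((i₁, a), (i₂, b))) =
      if i₁ = i ∧ i₂ = i then m.count s(a, b) else 0 := by
  have hinj : Function.Injective (Prod.mk i : Fin g → Fin u × Fin g) := by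
    intro x y h; exact (Prod.mk.injEq _ _ _ _).mp h |>.2
  split_ifs with h
  · rw [h.1, h.2]
    have : s((i, a), (i, b)) = Sym2.map (Prod.mk i) s(a, b) := by
      simp [Sym2.map_pair_eq]
    rw [this, Multiset.count_map_eq_count' _ m (Sym2.map.injective hinj)]
  · rw [Multiset.count_eq_zero]
    intro hmem
    obtain ⟨w, -, hw⟩ := Multiset.mem_map.mp hmem
    induction w using Sym2.ind with
    | _ x y =>
      rw [Sym2.map_pair_eq, Sym2.eq_iff] at hw
      rcases hw with ⟨h1, h2⟩ | ⟨h1, h2⟩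
      · injection h1 with e1 _
        injection h2 with e2 _
        exact h ⟨e1.symm, e2.symm⟩
      · injection h1 with e1 _
        injection h2 with e2 _
        exact h ⟨e2.symm, e1.symm⟩

lemma key (u g : ℕ) :
    2 • ((Finset.univ : Finset (Sym2 (Fin u × Fin g))).filter (fun e => ¬ e.IsDiag)).val
      = 2 • mpEdges u g
        + ((List.finRange u).map (fun i => (doubleK g).map (Sym2.map (Prod.mk i)))).sum := by
  refine Multiset.ext.mpr fun z => ?_
  induction z using Sym2.ind with
  | _ p q =>
    obtain ⟨i₁, a⟩ := p
    obtain ⟨i₂, b⟩ := q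
    rw [Multiset.count_add, Multiset.count_nsmul, Multiset.count_nsmul, count_filter_univ]
    have hmp : (mpEdges u g).count s((i₁, a), (i₂, b)) = if i₁ = i₂ then 0 else 1 := by
      rw [mpEdges, count_filter_univ]
      by_cases h : i₁ = i₂ <;> simp [h, Sym2.map_pair_eq]
    have hgrp : (((List.finRange u).map
        (fun i => (doubleK g).map (Sym2.map (Prod.mk i)))).sum).count s((i₁, a), (i₂, b))
        = if i₁ = i₂ then (if a = b then 0 else 2) else 0 := by
      rw [count_list_sum, ← Fin.sum_univ_def]
      have : ∀ i : Fin u, ((doubleK g).map (Sym2.map (Prod.mk i))).count s((i₁, a), (i₂, b))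
          = if i₁ = i ∧ i₂ = i then (if a = b then 0 else 2) else 0 := by
        intro i
        rw [count_map_group]
        congr 1
        rw [doubleK, Multiset.count_nsmul, count_filter_univ]
        by_cases hab : a = b <;> simp [hab]
      rw [Finset.sum_congr rfl (fun i _ => this i)]
      by_cases h12 : i₁ = i₂
      · subst h12
        rw [if_pos rfl]
        have h2 : ∀ i : Fin u, (if i₁ = i ∧ i₁ = i then (if a = b then 0 else 2) else 0)
            = if i₁ = i then (if a = b then 0 else 2) else 0 := fun i => by simp
        rw [Finset.sum_congr rfl (fun i _ => h2 i), Finset.sum_ite_eq]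
        simp
      · rw [if_neg h12]
        refine Finset.sum_eq_zero fun i _ => ?_
        rw [if_neg]
        rintro ⟨rfl, rfl⟩
        exact h12 rfl
    rw [hmp, hgrp]
    by_cases h12 : i₁ = i₂
    · subst h12
      by_cases hab : a = b <;> simp [hab, Sym2.mk_isDiag_iff, Prod.ext_iff]
    · simp [h12, Sym2.mk_isDiag_iff, Prod.ext_iff]

lemma map_nondiag_equiv {α β : Type} [DecidableEq α] [Fintype α] [DecidableEq β] [Fintype β]
    (e : α ≃ β) :
    (((Finset.univ : Finset (Sym2 α)).filter (fun s => ¬ s.IsDiag)).val).map (Sym2.map e)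
      = ((Finset.univ : Finset (Sym2 β)).filter (fun s => ¬ s.IsDiag)).val := by
  refine Multiset.ext.mpr fun z => ?_
  induction z using Sym2.ind with
  | _ p q =>
    have hz : s(p, q) = Sym2.map e s(e.symm p, e.symm q) := by simp [Sym2.map_pair_eq]
    rw [hz, Multiset.count_map_eq_count' _ _ (Sym2.map.injective e.injective)]
    rw [count_filter_univ, count_filter_univ]
    simp [Sym2.map_pair_eq, Sym2.mk_isDiag_iff]

lemma sum_map_add {α M : Type} [AddCommMonoid M] (l : List α) (f g : α → M) :
    (l.map (fun a => f a + g a)).sum = (l.map f).sum + (l.map g).sum := by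
  induction l with
  | nil => simp
  | cons a l ih => simp [ih]; exact (add_add_add_comm _ _ _ _)

lemma sum_sum_comm {α β M : Type} [AddCommMonoid M] (l1 : List α) (l2 : List β) (F : α → β → M) :
    (l1.map (fun a => (l2.map (F a)).sum)).sum
      = (l2.map (fun b => (l1.map (fun a => F a b)).sum)).sum := by
  induction l1 with
  | nil => simp
  | cons a l ih =>
    simp only [List.map_cons, List.sum_cons, ih, ← sum_map_add]

lemma sum_map_nsmul {α M : Type} [AddCommMonoid M] (l : List α) (n : ℕ) (h : α → M) :
    (l.map (fun a => n • h a)).sum = n • (l.map h).sum := by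
  induction l with
  | nil => simp
  | cons a l ih => simp [ih, smul_add]

lemma sum_map_flatMap {α β M : Type} [AddCommMonoid M] (l : List α) (f : α → List β) (g : β → M) :
    ((l.flatMap f).map g).sum = (l.map (fun a => ((f a).map g).sum)).sum := by
  induction l with
  | nil => simp
  | cons a l ih => simp [List.flatMap_cons, ih]

lemma sum_map_const {α : Type} (l : List α) (c : ℕ) : (l.map (fun _ => c)).sum = l.length * c := by
  induction l with
  | nil => simp
  | cons a l ih => simp [ih, Nat.succ_mul, Nat.add_comm]

def gddCls (Ks : List (List (Blk (Fin 4)))) (L : List (Blk V)) : List (List (Blk V)) :=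
  Ks.map (fun K => L.flatMap (fun B => K.map (mapBlk (phi B))))

lemma gddCls_parallel {Ks : List (List (Blk (Fin 4)))} (hKs : ∀ K ∈ Ks, IsParallel K)
    {L : List (Blk V)} (hL : IsParallel L) : ∀ C ∈ gddCls Ks L, IsParallel C := by
  intro C hC
  obtain ⟨K, hK, rfl⟩ := List.mem_map.mp hC
  apply isParallel_of_covers_univ
  refine covers_flatMap L _ Blk.verts ?_ Finset.univ ?_
  · intro B hB
    have h4 := hL.1 B hB
    have := covers_map_of_injective (phi B) (phi_injective B h4) K (hKs K hK)
    rwa [image_phi] at this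
  · intro v
    simpa using hL.2 v

lemma gddCls_cyc_sum {Ks : List (List (Blk (Fin 4)))} (hKs : (Ks.map classCyc).sum = doubleK 4)
    (L : List (Blk V)) :
    ((gddCls Ks L).map classCyc).sum = 2 • (L.map Blk.k4Edges).sum := by
  unfold gddCls
  rw [List.map_map]
  have h1 : ∀ K ∈ Ks, (classCyc ∘ fun K => L.flatMap fun B => K.map (mapBlk (phi B))) K
      = (L.map (fun B => (classCyc K).map (Sym2.map (phi B)))).sum := by
    intro K _
    show classCyc (L.flatMap fun B => K.map (mapBlk (phi B))) = _
    rw [classCyc_flatMap]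
    exact congrArg List.sum (List.map_congr_left fun B _ => classCyc_map (phi B) K)
  rw [List.map_congr_left h1, sum_sum_comm]
  have h2 : ∀ B ∈ L, (Ks.map (fun K => (classCyc K).map (Sym2.map (phi B)))).sum
      = 2 • B.k4Edges := by
    intro B _
    rw [sum_map_map, hKs, map_doubleK_four]
  rw [List.map_congr_left h2, sum_map_nsmul]

lemma gddCls_st_sum {Js : List (List (Blk (Fin 4)))} (hJs : (Js.map classSt).sum = doubleK 4)
    (L : List (Blk V)) :
    ((gddCls Js L).map classSt).sum = 2 • (L.map Blk.k4Edges).sum := by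
  unfold gddCls
  rw [List.map_map]
  have h1 : ∀ K ∈ Js, (classSt ∘ fun K => L.flatMap fun B => K.map (mapBlk (phi B))) K
      = (L.map (fun B => (classSt K).map (Sym2.map (phi B)))).sum := by
    intro K _
    show classSt (L.flatMap fun B => K.map (mapBlk (phi B))) = _
    rw [classSt_flatMap]
    exact congrArg List.sum (List.map_congr_left fun B _ => classSt_map (phi B) K)
  rw [List.map_congr_left h1, sum_sum_comm]
  have h2 : ∀ B ∈ L, (Js.map (fun K => (classSt K).map (Sym2.map (phi B)))).sum
      = 2 • B.k4Edges := by
    intro B _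
    rw [sum_map_map, hJs, map_doubleK_four]
  rw [List.map_congr_left h2, sum_map_nsmul]

def grpCls {g : ℕ} (u : ℕ) (M : List (Blk (Fin g))) : List (Blk (Fin u × Fin g)) :=
  (List.finRange u).flatMap (fun i => M.map (mapBlk (Prod.mk i)))

lemma grpCls_parallel {g u : ℕ} {M : List (Blk (Fin g))} (hM : IsParallel M) :
    IsParallel (grpCls u M) := by
  apply isParallel_of_covers_univ
  refine covers_flatMap (List.finRange u) _
    (fun i => Finset.univ.image (Prod.mk i)) ?_ Finset.univ ?_
  · intro i _
    exact covers_map_of_injective (Prod.mk i)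
      (fun x y h => ((Prod.mk.injEq _ _ _ _).mp h).2) M hM
  · rintro ⟨i, a⟩
    rw [if_pos (Finset.mem_univ _)]
    have h : ∀ j : Fin u, (decide ((i, a) ∈ Finset.univ.image (Prod.mk j)))
        = decide (i = j) := by
      intro j
      by_cases hj : i = j
      · subst hj
        simp [Finset.mem_image]
      · simp only [decide_eq_decide, Finset.mem_image]
        constructor
        · rintro ⟨w, -, hw⟩
          exact ((Prod.mk.injEq _ _ _ _).mp hw).1.symm
        · intro hij; exact absurd hij hj
    rw [List.countP_congr (fun j _ => by rw [h j]), countP_eq_sum_ite, ← Fin.sum_univ_def]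
    have h2 : ∀ j : Fin u, (if decide (i = j) = true then (1:ℕ) else 0) = if i = j then 1 else 0 :=
      fun j => by by_cases hj : i = j <;> simp [hj]
    rw [Finset.sum_congr rfl (fun j _ => h2 j), Finset.sum_ite_eq]
    simp

lemma grpCls_cyc {g u : ℕ} (M : List (Blk (Fin g))) :
    classCyc (grpCls u M)
      = ((List.finRange u).map (fun i => (classCyc M).map (Sym2.map (Prod.mk i)))).sum := by
  unfold grpCls
  rw [classCyc_flatMap]
  exact congrArg List.sum (List.map_congr_left fun i _ => classCyc_map (Prod.mk i) M)

lemma grpCls_st {g u : ℕ} (M : List (Blk (Fin g))) :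
    classSt (grpCls u M)
      = ((List.finRange u).map (fun i => (classSt M).map (Sym2.map (Prod.mk i)))).sum := by
  unfold grpCls
  rw [classSt_flatMap]
  exact congrArg List.sum (List.map_congr_left fun i _ => classSt_map (Prod.mk i) M)

lemma isParallel_map_equiv {e : W ≃ V} {C : List (Blk W)} (h : IsParallel C) :
    IsParallel (C.map (mapBlk e)) := by
  apply isParallel_of_covers_univ
  have := covers_map_of_injective e e.injective C h
  rwa [Finset.image_univ_equiv] at this

/-- from a 4-RGDD of type `g^u` with `t = g(u-1)/3` classes,
fillings of `2K_4` with 3 cycle classes or 4 star classes, and a URD of `2K_g`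
with parameters `(r₂, s₂)`, we get a URD of `2K_{gu}` with parameters
`(r₂ + 3x, s₂ + 4(t-x))` for every `0 ≤ x ≤ t`. -/
theorem stmt11 (g u t r₂ s₂ : ℕ) (ht : 3 * t = g * (u - 1))
    (hGDD : IsRGDD u g t) (h4c : URD 4 3 0) (h4s : URD 4 0 4)
    (hg : URD g r₂ s₂) :
    ∀ x : ℕ, x ≤ t → URD (g * u) (r₂ + 3 * x) (s₂ + 4 * (t - x)) := by
  intro x hx
  obtain ⟨Cs, hCslen, hCspar, hCssum⟩ := hGDD
  obtain ⟨Ks, Ss4, hKlen, hSlen, hKpar, -, hKsum⟩ := h4c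
  rw [List.length_eq_zero_iff] at hSlen
  subst hSlen
  rw [List.map_nil, List.sum_nil, add_zero] at hKsum
  obtain ⟨E4, Js, hElen, hJlen, -, hJpar, hJsum⟩ := h4s
  rw [List.length_eq_zero_iff] at hElen
  subst hElen
  rw [List.map_nil, List.sum_nil, zero_add] at hJsum
  obtain ⟨Ms, Ns, hMlen, hNlen, hMpar, hNpar, hMNsum⟩ := hg
  set e : Fin u × Fin g ≃ Fin (g * u) := (Equiv.prodComm (Fin u) (Fin g)).trans finProdFinEquiv
    with he
  set grpC : List (List (Blk (Fin u × Fin g))) := Ms.map (grpCls u) with hgrpC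
  set grpS : List (List (Blk (Fin u × Fin g))) := Ns.map (grpCls u) with hgrpS
  set gddC : List (List (Blk (Fin u × Fin g))) := (Cs.take x).flatMap (gddCls Ks) with hgddC
  set gddS : List (List (Blk (Fin u × Fin g))) := (Cs.drop x).flatMap (gddCls Js) with hgddS
  refine ⟨(grpC ++ gddC).map (List.map (mapBlk e)),
          (grpS ++ gddS).map (List.map (mapBlk e)), ?_, ?_, ?_, ?_, ?_⟩
  · -- length r₂ + 3x
    rw [List.length_map, List.length_append, hgrpC, List.length_map, hMlen, hgddC,
      List.length_flatMap]
    have h3 : ∀ L ∈ Cs.take x, (List.length ∘ gddCls Ks) L = 3 := by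
      intro L _
      simp [gddCls, hKlen]
    rw [List.map_congr_left (f := fun a => (gddCls Ks a).length) h3, sum_map_const, List.length_take, hCslen]
    omega
  · -- length s₂ + 4(t-x)
    rw [List.length_map, List.length_append, hgrpS, List.length_map, hNlen, hgddS,
      List.length_flatMap]
    have h3 : ∀ L ∈ Cs.drop x, (List.length ∘ gddCls Js) L = 4 := by
      intro L _
      simp [gddCls, hJlen]
    rw [List.map_congr_left (f := fun a => (gddCls Js a).length) h3, sum_map_const, List.length_drop, hCslen]
    omega
  · -- parallel cyc
    intro L hL
    obtain ⟨C, hC, rfl⟩ := List.mem_map.mp hL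
    refine isParallel_map_equiv ?_
    rcases List.mem_append.mp hC with hC | hC
    · obtain ⟨M, hM, rfl⟩ := List.mem_map.mp hC
      exact grpCls_parallel (hMpar M hM)
    · obtain ⟨L', hL', hCg⟩ := List.mem_flatMap.mp hC
      exact gddCls_parallel hKpar (hCspar L' (List.take_subset x Cs hL')) C hCg
  · -- parallel st
    intro L hL
    obtain ⟨C, hC, rfl⟩ := List.mem_map.mp hL
    refine isParallel_map_equiv ?_
    rcases List.mem_append.mp hC with hC | hC
    · obtain ⟨M, hM, rfl⟩ := List.mem_map.mp hC
      exact grpCls_parallel (hNpar M hM)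
    · obtain ⟨L', hL', hCg⟩ := List.mem_flatMap.mp hC
      exact gddCls_parallel hJpar (hCspar L' (List.drop_subset x Cs hL')) C hCg
  · -- edge sum
    have hmapC : ∀ (X : List (List (Blk (Fin u × Fin g)))),
        ((X.map (List.map (mapBlk e))).map classCyc).sum
          = ((X.map classCyc).sum).map (Sym2.map e) := by
      intro X
      rw [List.map_map, ← sum_map_map]
      exact congrArg List.sum (List.map_congr_left fun C _ =>
        (by exact classCyc_map (⇑e) C : (classCyc ∘ List.map (mapBlk (⇑e))) C = _))
    have hmapS : ∀ (X : List (List (Blk (Fin u × Fin g)))),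
        ((X.map (List.map (mapBlk e))).map classSt).sum
          = ((X.map classSt).sum).map (Sym2.map e) := by
      intro X
      rw [List.map_map, ← sum_map_map]
      exact congrArg List.sum (List.map_congr_left fun C _ =>
        (by exact classSt_map (⇑e) C : (classSt ∘ List.map (mapBlk (⇑e))) C = _))
    rw [hmapC, hmapS, ← Multiset.map_add]
    -- compute the unmapped total
    have hgrp : ∀ (Xs : List (List (Blk (Fin g)))) (cl : List (Blk (Fin u × Fin g)) → Multiset (Sym2 (Fin u × Fin g)))
        (clg : List (Blk (Fin g)) → Multiset (Sym2 (Fin g)))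
        (hcl : ∀ M : List (Blk (Fin g)), cl (grpCls u M)
          = ((List.finRange u).map (fun i => (clg M).map (Sym2.map (Prod.mk i)))).sum),
        ((Xs.map (grpCls u)).map cl).sum
          = ((List.finRange u).map (fun i => ((Xs.map clg).sum).map (Sym2.map (Prod.mk i)))).sum := by
      intro Xs cl clg hcl
      rw [List.map_map]
      have h1 : ∀ M ∈ Xs, (cl ∘ grpCls u) M
          = ((List.finRange u).map (fun i => (clg M).map (Sym2.map (Prod.mk i)))).sum :=
        fun M _ => hcl M
      rw [List.map_congr_left h1, sum_sum_comm]
      refine congrArg List.sum (List.map_congr_left fun i _ => ?_)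
      rw [sum_map_map]
    have hgC := hgrp Ms classCyc classCyc (grpCls_cyc)
    have hgS := hgrp Ns classSt classSt (grpCls_st)
    have hdC : (gddC.map classCyc).sum = 2 • ((Cs.take x).map (fun L => (L.map Blk.k4Edges).sum)).sum := by
      rw [hgddC, sum_map_flatMap]
      have h1 : ∀ L ∈ Cs.take x, ((gddCls Ks L).map classCyc).sum
          = 2 • (L.map Blk.k4Edges).sum := fun L _ => gddCls_cyc_sum hKsum L
      rw [List.map_congr_left h1, sum_map_nsmul]
    have hdS : (gddS.map classSt).sum = 2 • ((Cs.drop x).map (fun L => (L.map Blk.k4Edges).sum)).sum := by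
      rw [hgddS, sum_map_flatMap]
      have h1 : ∀ L ∈ Cs.drop x, ((gddCls Js L).map classSt).sum
          = 2 • (L.map Blk.k4Edges).sum := fun L _ => gddCls_st_sum hJsum L
      rw [List.map_congr_left h1, sum_map_nsmul]
    rw [List.map_append, List.map_append, List.sum_append, List.sum_append]
    rw [hgC, hgS, hdC, hdS]
    have hrearr :
        (((List.finRange u).map (fun i => ((Ms.map classCyc).sum).map (Sym2.map (Prod.mk i)))).sum
          + 2 • ((Cs.take x).map (fun L => (L.map Blk.k4Edges).sum)).sum)
        + (((List.finRange u).map (fun i => ((Ns.map classSt).sum).map (Sym2.map (Prod.mk i)))).sum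
          + 2 • ((Cs.drop x).map (fun L => (L.map Blk.k4Edges).sum)).sum)
        = 2 • ((Finset.univ : Finset (Sym2 (Fin u × Fin g))).filter (fun s => ¬ s.IsDiag)).val := by
      have hg1 : ((List.finRange u).map (fun i => ((Ms.map classCyc).sum).map (Sym2.map (Prod.mk i)))).sum
          + ((List.finRange u).map (fun i => ((Ns.map classSt).sum).map (Sym2.map (Prod.mk i)))).sum
          = ((List.finRange u).map (fun i => (doubleK g).map (Sym2.map (Prod.mk i)))).sum := by
        rw [← sum_map_add]
        refine congrArg List.sum (List.map_congr_left fun i _ => ?_)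
        rw [← Multiset.map_add, hMNsum]
      have hg2 : 2 • ((Cs.take x).map (fun L => (L.map Blk.k4Edges).sum)).sum
          + 2 • ((Cs.drop x).map (fun L => (L.map Blk.k4Edges).sum)).sum
          = 2 • mpEdges u g := by
        rw [← smul_add, ← List.sum_append, ← List.map_append, List.take_append_drop, hCssum]
      calc _ = (((List.finRange u).map (fun i => ((Ms.map classCyc).sum).map (Sym2.map (Prod.mk i)))).sum
          + ((List.finRange u).map (fun i => ((Ns.map classSt).sum).map (Sym2.map (Prod.mk i)))).sum)
          + (2 • ((Cs.take x).map (fun L => (L.map Blk.k4Edges).sum)).sum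
          + 2 • ((Cs.drop x).map (fun L => (L.map Blk.k4Edges).sum)).sum) := by abel
        _ = 2 • mpEdges u g + ((List.finRange u).map (fun i => (doubleK g).map (Sym2.map (Prod.mk i)))).sum := by
            rw [hg1, hg2]; abel
        _ = _ := (key u g).symm
    rw [hrearr, Multiset.map_nsmul, map_nondiag_equiv e, doubleK]
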